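/- (Embeddability of direct limits.) Let E be a complete Boolean algebra, K a directed partial order, and (A_k : k ∈ K), (E_k : k ∈ K) complete subalgebras of E such that A_k ⊆ E_k for all k, A_k ⊆ A_l and E_k ⊆ E_l for k ≤ l, and ⋃_{k∈K} E_k is dense in E (for every nonzero e ∈ E there are k ∈ K and nonzero e' ∈ E_k with e' ≤ e), i.e., E is the direct limit of the E_k. Assume correctness of all diagrams (A_k; A_l, E_k; E_l): for all k ≤ l in K and all a ∈ A_l, sInf {e ∈ E_k : a ≤ e} = sInf {b ∈ A_k : a ≤ b}. Let A be the smallest complete subalgebra of E containing ⋃_{k∈K} A_k. Then: (a) ⋃_{k∈K} A_k is dense in A (for every nonzero a ∈ A there are k ∈ K and nonzero b ∈ A_k with b ≤ a), so that A is the direct limit of the A_k and is completely embedded in E; and (b) correctness is preserved: for every k ∈ K and every a ∈ A, sInf {e ∈ E_k : a ≤ e} = sInf {b ∈ A_k : a ≤ b}. -/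
import Mathlib


/-- A complete subalgebra of a complete Boolean algebra: a subset containing `⊥`,
closed under complementation and under suprema of arbitrary subsets. -/
structure CompleteSubalgebra {E : Type*} [CompleteBooleanAlgebra E] (S : Set E) : Prop where
  bot_mem : ⊥ ∈ S
  compl_mem : ∀ a ∈ S, aᶜ ∈ S
  sSup_mem : ∀ T ⊆ S, sSup T ∈ S

lemma CompleteSubalgebra.sInf_mem {E : Type*} [CompleteBooleanAlgebra E] {S : Set E}
    (hS : CompleteSubalgebra S) {T : Set E} (hT : T ⊆ S) : sInf T ∈ S := by
  have h : sInf T = (sSup ((·ᶜ) '' T))ᶜ := by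
    rw [sSup_image, ← compl_sInf, compl_compl]
  rw [h]
  refine hS.compl_mem _ (hS.sSup_mem _ ?_)
  rintro x ⟨y, hy, rfl⟩
  exact hS.compl_mem y (hT hy)

/-- Embeddability of direct limits, with preservation of correctness. -/
theorem direct_limit_embeds {E : Type*} [CompleteBooleanAlgebra E]
    {K : Type*} [PartialOrder K]
    (hdir : ∀ k l : K, ∃ m : K, k ≤ m ∧ l ≤ m)
    (Asub Esub : K → Set E)
    (hA : ∀ k, CompleteSubalgebra (Asub k)) (hE : ∀ k, CompleteSubalgebra (Esub k))
    (hAE : ∀ k, Asub k ⊆ Esub k)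
    (hAmono : ∀ k l : K, k ≤ l → Asub k ⊆ Asub l)
    (hEmono : ∀ k l : K, k ≤ l → Esub k ⊆ Esub l)
    (hEdense : ∀ e : E, e ≠ ⊥ → ∃ k : K, ∃ e' ∈ Esub k, e' ≠ ⊥ ∧ e' ≤ e)
    (hcorrect : ∀ k l : K, k ≤ l → ∀ a ∈ Asub l,
      sInf {e | e ∈ Esub k ∧ a ≤ e} = sInf {b | b ∈ Asub k ∧ a ≤ b})
    -- `A` is the smallest complete subalgebra of `E` containing `⋃ k, Asub k`
    (A : Set E)
    (hA' : A = ⋂₀ {S : Set E | CompleteSubalgebra S ∧ (⋃ k : K, Asub k) ⊆ S}) :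
    -- (a) density: `A` is the direct limit of the `Asub k`
    (∀ a ∈ A, a ≠ ⊥ → ∃ k : K, ∃ b ∈ Asub k, b ≠ ⊥ ∧ b ≤ a) ∧
    -- (b) correctness is preserved
    (∀ k : K, ∀ a ∈ A,
      sInf {e | e ∈ Esub k ∧ a ≤ e} = sInf {b | b ∈ Asub k ∧ a ≤ b}) := by
  classical
  -- D is the union of the A_k's
  set D : Set E := ⋃ k, Asub k with hD
  -- the projections onto A_k and E_k
  set q : K → E → E := fun k x => sInf {b | b ∈ Asub k ∧ x ≤ b} with hq
  set p : K → E → E := fun k x => sInf {e | e ∈ Esub k ∧ x ≤ e} with hp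
  have hqmem : ∀ k x, q k x ∈ Asub k := fun k x =>
    (hA k).sInf_mem (fun b hb => hb.1)
  have hpmem : ∀ k x, p k x ∈ Esub k := fun k x =>
    (hE k).sInf_mem (fun b hb => hb.1)
  have hle_q : ∀ k x, x ≤ q k x := fun k x => le_sInf (fun b hb => hb.2)
  have hle_p : ∀ k x, x ≤ p k x := fun k x => le_sInf (fun b hb => hb.2)
  -- correctness for all elements of D, at every index k
  have hpq : ∀ k : K, ∀ d ∈ D, p k d = q k d := by
    intro k d hd
    obtain ⟨l, hl⟩ := Set.mem_iUnion.mp hd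
    obtain ⟨m, hkm, hlm⟩ := hdir k l
    exact hcorrect k m hkm d (hAmono l m hlm hl)
  -- the candidate complete subalgebra: elements which are suprema of subsets of D
  set C : Set E := {a | sSup {d | d ∈ D ∧ d ≤ a} = a} with hC
  have hDC : D ⊆ C := by
    intro d hd
    exact le_antisymm (sSup_le fun _ h => h.2) (le_sSup ⟨hd, le_refl d⟩)
  have hCsub : CompleteSubalgebra C := by
    constructor
    · -- ⊥ ∈ C
      exact le_antisymm (sSup_le fun d hd => hd.2) bot_le
    · -- complement
      intro a ha
      show sSup {d | d ∈ D ∧ d ≤ aᶜ} = aᶜ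
      refine le_antisymm (sSup_le fun d hd => hd.2) ?_
      set U : Set E := {d | d ∈ D ∧ d ≤ aᶜ} with hU
      by_contra hcon
      set z : E := aᶜ ⊓ (sSup U)ᶜ with hz
      have hzne : z ≠ ⊥ := by
        intro h0
        apply hcon
        have : aᶜ \ sSup U = ⊥ := by rw [sdiff_eq]; exact h0
        exact sdiff_eq_bot_iff.mp this
      obtain ⟨k, e, heE, hene, hez⟩ := hEdense z hzne
      have hea : e ≤ aᶜ := hez.trans inf_le_left
      have heU : e ≤ (sSup U)ᶜ := hez.trans inf_le_right
      -- the A_k element b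
      set X : Set E := {d | d ∈ D ∧ d ≤ a} with hX
      set b : E := (sSup (q k '' X))ᶜ with hb
      have hbA : b ∈ Asub k := by
        refine (hA k).compl_mem _ ((hA k).sSup_mem _ ?_)
        rintro x ⟨d, hd, rfl⟩
        exact hqmem k d
      have hab : a ≤ bᶜ := by
        rw [hb, compl_compl]
        conv_lhs => rw [← ha]
        exact sSup_le fun d hd => (hle_q k d).trans (le_sSup ⟨d, hd, rfl⟩)
      have hbU : b ∈ U := ⟨Set.mem_iUnion.mpr ⟨k, hbA⟩, le_compl_comm.mp hab⟩
      have heb' : e ≤ bᶜ := heU.trans (compl_le_compl (le_sSup hbU))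
      have heb : e ≤ b := by
        rw [hb]
        rw [le_compl_comm]
        refine sSup_le ?_
        rintro x ⟨d, hd, rfl⟩
        rw [← hpq k d hd.1]
        refine sInf_le ⟨(hE k).compl_mem e heE, ?_⟩
        exact hd.2.trans (le_compl_comm.mp hea)
      have : e ≤ ⊥ := by
        calc e ≤ b ⊓ bᶜ := le_inf heb heb'
        _ = ⊥ := inf_compl_eq_bot
      exact hene (le_bot_iff.mp this)
    · -- sSup
      intro T hT
      show sSup {d | d ∈ D ∧ d ≤ sSup T} = sSup T
      refine le_antisymm (sSup_le fun d hd => hd.2) (sSup_le fun t ht => ?_)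
      have h1 : sSup {d | d ∈ D ∧ d ≤ t} = t := hT ht
      conv_lhs => rw [← h1]
      exact sSup_le fun d hd => le_sSup ⟨hd.1, hd.2.trans (le_sSup ht)⟩
  have hAC : A ⊆ C := by
    rw [hA']
    intro a ha
    exact ha C ⟨hCsub, hDC⟩
  constructor
  · -- (a) density
    intro a haA hane
    have haC : sSup {d | d ∈ D ∧ d ≤ a} = a := hAC haA
    by_contra hcon
    push_neg at hcon
    apply hane
    rw [← haC]
    refine le_antisymm (sSup_le fun d hd => ?_) bot_le
    obtain ⟨k, hk⟩ := Set.mem_iUnion.mp hd.1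
    rcases eq_or_ne d ⊥ with h | h
    · exact h.le
    · exact absurd hd.2 (hcon k d hk h)
  · -- (b) correctness
    intro k a haA
    have haC : sSup {d | d ∈ D ∧ d ≤ a} = a := hAC haA
    set X : Set E := {d | d ∈ D ∧ d ≤ a} with hX
    set u : E := sSup (q k '' X) with hu
    have huA : u ∈ Asub k := by
      refine (hA k).sSup_mem _ ?_
      rintro x ⟨d, hd, rfl⟩
      exact hqmem k d
    have hau : a ≤ u := by
      conv_lhs => rw [← haC]
      exact sSup_le fun d hd => (hle_q k d).trans (le_sSup ⟨d, hd, rfl⟩)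
    have hup : u ≤ sInf {e | e ∈ Esub k ∧ a ≤ e} := by
      refine le_sInf fun e he => ?_
      refine sSup_le ?_
      rintro x ⟨d, hd, rfl⟩
      rw [← hpq k d hd.1]
      exact sInf_le ⟨he.1, hd.2.trans he.2⟩
    show p k a = q k a
    have h1 : p k a ≤ q k a :=
      sInf_le_sInf (fun b (hb : b ∈ Asub k ∧ a ≤ b) =>
        (⟨hAE k hb.1, hb.2⟩ : b ∈ Esub k ∧ a ≤ b))
    have h2 : q k a ≤ u := sInf_le (⟨huA, hau⟩ : u ∈ Asub k ∧ a ≤ u)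
    exact le_antisymm h1 (h2.trans hup)
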